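/- arXiv:2008.03837 — 2 statements merged into one kernel-verified Lean document; each statement's English description precedes it below -/
import Mathlib

section
/- Suppose (b_L^{k})_{L,k} are elements of a finite-dimensional normed space with |b_L^{k+1}| uniformly bounded in L, suppose for each p ∈ (0,1] the limit S(p) = lim_{L→∞} S_L(p) exists where |S_L(p) − (∑_{j=0}^{k} (p^j/j!) b_L^{j})| ≤ (Cp)^{k+1} for all L, p, k, and suppose b^j := lim_{L→∞} b_L^{j} exists for all j ≤ k. Then b^{k+1} := lim_{L→∞} b_L^{k+1} exists, and equals lim_{p↓0} (k+1)! p^{−(k+1)} (S(p) − ∑_{j=0}^k (p^j/j!) b^j). -/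
theorem stmt9 {V : Type*} [NormedAddCommGroup V] [NormedSpace ℝ V] [FiniteDimensional ℝ V]
    (b : ℕ → ℕ → V) (k : ℕ) (C : ℝ) (hC : 0 < C) (M : ℝ)
    (hbd : ∀ L : ℕ, ‖b L (k + 1)‖ ≤ M)
    (SL : ℕ → ℝ → V) (S : ℝ → V)
    (hconv : ∀ p : ℝ, 0 < p → p ≤ 1 →
      Filter.Tendsto (fun L => SL L p) Filter.atTop (nhds (S p)))
    (hexp : ∀ L : ℕ, ∀ p : ℝ, 0 < p → p ≤ 1 → ∀ k' : ℕ,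
      ‖SL L p - ∑ j ∈ Finset.range (k' + 1), (p ^ j / (j.factorial : ℝ)) • b L j‖
        ≤ (C * p) ^ (k' + 1))
    (bLim : ℕ → V)
    (hblim : ∀ j ≤ k, Filter.Tendsto (fun L => b L j) Filter.atTop (nhds (bLim j))) :
    ∃ bk1 : V, Filter.Tendsto (fun L => b L (k + 1)) Filter.atTop (nhds bk1) ∧
      Filter.Tendsto (fun p : ℝ =>
          (((k + 1).factorial : ℝ) / p ^ (k + 1)) •
            (S p - ∑ j ∈ Finset.range (k + 1), (p ^ j / (j.factorial : ℝ)) • bLim j))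
        (nhdsWithin 0 (Set.Ioi 0)) (nhds bk1) := by
  classical
  set D : ℝ := ((k + 1).factorial : ℝ) * C ^ (k + 2) with hDdef
  have hD0 : 0 ≤ D := by positivity
  set w : ℕ → ℝ → V := fun L p => (((k + 1).factorial : ℝ) / p ^ (k + 1)) •
      (SL L p - ∑ j ∈ Finset.range (k + 1), (p ^ j / (j.factorial : ℝ)) • b L j) with hwdef
  set T : ℝ → V := fun p => (((k + 1).factorial : ℝ) / p ^ (k + 1)) •
      (S p - ∑ j ∈ Finset.range (k + 1), (p ^ j / (j.factorial : ℝ)) • bLim j) with hTdef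
  -- key estimate
  have key : ∀ L : ℕ, ∀ p : ℝ, 0 < p → p ≤ 1 → ‖b L (k + 1) - w L p‖ ≤ D * p := by
    intro L p hp hp1
    have hpk : (0 : ℝ) < p ^ (k + 1) := pow_pos hp _
    have hfac : (0 : ℝ) < ((k + 1).factorial : ℝ) := by
      exact_mod_cast Nat.factorial_pos (k + 1)
    have hc : (((k + 1).factorial : ℝ) / p ^ (k + 1)) *
        (p ^ (k + 1) / ((k + 1).factorial : ℝ)) = 1 := by
      field_simp
    have hb : b L (k + 1) = (((k + 1).factorial : ℝ) / p ^ (k + 1)) •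
        ((p ^ (k + 1) / ((k + 1).factorial : ℝ)) • b L (k + 1)) := by
      rw [smul_smul, hc, one_smul]
    have hsum := hexp L p hp hp1 (k + 1)
    rw [Finset.sum_range_succ] at hsum
    have hrw : b L (k + 1) - w L p = (((k + 1).factorial : ℝ) / p ^ (k + 1)) •
        (-(SL L p - (∑ j ∈ Finset.range (k + 1), (p ^ j / (j.factorial : ℝ)) • b L j
          + (p ^ (k + 1) / ((k + 1).factorial : ℝ)) • b L (k + 1)))) := by
      conv_lhs => rw [hb]
      rw [hwdef]
      simp only []
      rw [← smul_sub]
      congr 1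
      abel
    rw [hrw, norm_smul, norm_neg, Real.norm_eq_abs,
      abs_of_pos (div_pos hfac hpk)]
    calc ((k + 1).factorial : ℝ) / p ^ (k + 1) *
        ‖SL L p - (∑ j ∈ Finset.range (k + 1), (p ^ j / (j.factorial : ℝ)) • b L j
          + (p ^ (k + 1) / ((k + 1).factorial : ℝ)) • b L (k + 1))‖
        ≤ ((k + 1).factorial : ℝ) / p ^ (k + 1) * (C * p) ^ (k + 2) := by
          exact mul_le_mul_of_nonneg_left hsum (le_of_lt (div_pos hfac hpk))
      _ = D * p := by
          rw [hDdef, mul_pow]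
          have : p ^ (k + 2) = p ^ (k + 1) * p := by ring
          rw [this]
          field_simp
  -- convergence of w L p in L
  have hwT : ∀ p : ℝ, 0 < p → p ≤ 1 →
      Filter.Tendsto (fun L => w L p) Filter.atTop (nhds (T p)) := by
    intro p hp hp1
    apply Filter.Tendsto.const_smul
    apply Filter.Tendsto.sub (hconv p hp hp1)
    apply tendsto_finset_sum
    intro j hj
    exact (hblim j (Nat.lt_succ_iff.mp (Finset.mem_range.mp hj))).const_smul _
  -- Cauchy
  have hcauchy : CauchySeq (fun L => b L (k + 1)) := by
    rw [Metric.cauchySeq_iff]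
    intro ε hε
    obtain ⟨p, hp0, hp1, hpD⟩ : ∃ p : ℝ, 0 < p ∧ p ≤ 1 ∧ D * p < ε / 4 := by
      refine ⟨min 1 (ε / (4 * (D + 1))), ?_, min_le_left _ _, ?_⟩
      · positivity
      · have h1 : D * min 1 (ε / (4 * (D + 1))) ≤ D * (ε / (4 * (D + 1))) :=
          mul_le_mul_of_nonneg_left (min_le_right _ _) hD0
        have h2 : D * (ε / (4 * (D + 1))) < ε / 4 := by
          have hDD : (0:ℝ) < D + 1 := by linarith
          have hlt : D / (D + 1) < 1 := (div_lt_one hDD).mpr (by linarith)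
          calc D * (ε / (4 * (D + 1))) = (D / (D + 1)) * (ε / 4) := by
                field_simp
            _ < 1 * (ε / 4) := by
                exact mul_lt_mul_of_pos_right hlt (by positivity)
            _ = ε / 4 := one_mul _
        linarith
    have hwc : CauchySeq (fun L => w L p) := (hwT p hp0 hp1).cauchySeq
    obtain ⟨N, hN⟩ := Metric.cauchySeq_iff.mp hwc (ε / 2) (by linarith)
    refine ⟨N, fun L hL L' hL' => ?_⟩
    have h1 := key L p hp0 hp1
    have h2 := key L' p hp0 hp1
    have h3 := hN L hL L' hL'
    rw [dist_eq_norm] at h3 ⊢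
    calc ‖b L (k + 1) - b L' (k + 1)‖
        ≤ ‖b L (k + 1) - w L p‖ + ‖w L p - w L' p‖ + ‖w L' p - b L' (k + 1)‖ := by
          have := norm_add₃_le (a := b L (k + 1) - w L p) (b := w L p - w L' p)
            (c := w L' p - b L' (k + 1))
          simpa using this
      _ < D * p + ε / 2 + D * p := by
          rw [norm_sub_rev (w L' p)]
          linarith
      _ < ε := by linarith
  obtain ⟨bk1, hbk1⟩ := cauchySeq_tendsto_of_complete hcauchy
  refine ⟨bk1, hbk1, ?_⟩
  -- limit estimate
  have hTb : ∀ p : ℝ, 0 < p → p ≤ 1 → ‖T p - bk1‖ ≤ D * p := by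
    intro p hp hp1
    have hlim : Filter.Tendsto (fun L => ‖b L (k + 1) - w L p‖) Filter.atTop
        (nhds ‖bk1 - T p‖) := (hbk1.sub (hwT p hp hp1)).norm
    have := le_of_tendsto hlim (Filter.Eventually.of_forall fun L => key L p hp hp1)
    rwa [norm_sub_rev]
  rw [tendsto_iff_norm_sub_tendsto_zero]
  have hsq : Filter.Tendsto (fun p : ℝ => D * p) (nhdsWithin 0 (Set.Ioi 0)) (nhds 0) := by
    have : Filter.Tendsto (fun p : ℝ => D * p) (nhds 0) (nhds (D * 0)) :=
      (continuous_const.mul continuous_id).tendsto 0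
    rw [mul_zero] at this
    exact this.mono_left nhdsWithin_le_nhds
  have h1 : ∀ᶠ p : ℝ in nhdsWithin 0 (Set.Ioi 0), p ≤ 1 := by
    have : ∀ᶠ p : ℝ in nhds (0:ℝ), p ≤ 1 := by
      filter_upwards [Metric.ball_mem_nhds (0:ℝ) one_pos] with p hp
      rw [Metric.mem_ball, Real.dist_eq, sub_zero] at hp
      have := abs_lt.mp hp
      linarith [this.2]
    exact this.filter_mono nhdsWithin_le_nhds
  have h2 : ∀ᶠ p : ℝ in nhdsWithin 0 (Set.Ioi 0), 0 < p :=
    eventually_mem_nhdsWithin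
  apply squeeze_zero'
  · filter_upwards with p using norm_nonneg _
  · filter_upwards [h1, h2] with p hp1 hp0
    exact hTb p hp0 hp1
  · exact hsq
end

section
/- Let d ≥ 1 and let (τ_m)_{m≥0} be a sequence of reals with τ_m ≥ −C·3^{−m} for all m, and set J_n := J_0 − ∑_{m=0}^{n−1} τ_m for a given J_0 ≥ 0. Suppose there exist C, ε > 0 with J_n ≤ C·3^{−εn} + C·∑_{m=0}^{n} 3^{−ε(n−m)}·(τ_m + C·3^{−m}) and J_n ≥ 0 for all n. Then there exist γ ∈ (0, ε) and C' > 0 such that J_n ≤ C'·3^{−γn} and τ_n ≤ C'·3^{−γn} for all n ≥ 0. -/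
open Finset Real

set_option maxHeartbeats 1000000 in
theorem stmt19 (d : ℕ) (hd : 1 ≤ d) (C ε : ℝ) (hC : 0 < C) (hε : 0 < ε)
    (τ : ℕ → ℝ) (J0 : ℝ) (hJ0 : 0 ≤ J0) (J : ℕ → ℝ)
    (hJ : ∀ n : ℕ, J n = J0 - ∑ m ∈ Finset.range n, τ m)
    (hτ : ∀ m : ℕ, τ m ≥ -C * (3 : ℝ) ^ (-(m : ℝ)))
    (hJpos : ∀ n : ℕ, 0 ≤ J n)
    (hmain : ∀ n : ℕ, J n ≤ C * (3 : ℝ) ^ (-(ε * (n : ℝ)))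
        + C * ∑ m ∈ Finset.range (n + 1),
            (3 : ℝ) ^ (-(ε * ((n : ℝ) - (m : ℝ)))) * (τ m + C * (3 : ℝ) ^ (-(m : ℝ)))) :
    ∃ γ : ℝ, 0 < γ ∧ γ < ε ∧ ∃ C' > (0 : ℝ), ∀ n : ℕ,
      J n ≤ C' * (3 : ℝ) ^ (-(γ * (n : ℝ))) ∧ τ n ≤ C' * (3 : ℝ) ^ (-(γ * (n : ℝ))) := by
  have h3 : (0:ℝ) < 3 := by norm_num
  have h13 : (1:ℝ) ≤ 3 := by norm_num
  obtain ⟨C₁, hC₁def⟩ : ∃ c : ℝ, c = max C 1 := ⟨_, rfl⟩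
  have hC₁1 : 1 ≤ C₁ := hC₁def ▸ le_max_right _ _
  have hC₁0 : 0 < C₁ := lt_of_lt_of_le one_pos hC₁1
  have hCC₁ : C ≤ C₁ := hC₁def ▸ le_max_left _ _
  have hC₁sq : C₁ ≤ C₁^2 := by nlinarith
  have hrpos : ∀ x : ℝ, (0:ℝ) < (3:ℝ) ^ x := fun x => Real.rpow_pos_of_pos h3 x
  have hmono : ∀ x y : ℝ, x ≤ y → (3:ℝ) ^ x ≤ (3:ℝ) ^ y :=
    fun x y h => Real.rpow_le_rpow_of_exponent_le h13 h
  have hwle1 : ∀ x : ℝ, x ≤ 0 → (3:ℝ) ^ x ≤ 1 := by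
    intro x hx
    have := hmono x 0 hx
    simpa using this
  -- nonnegativity of σ with C and with C₁
  have hσC : ∀ m : ℕ, 0 ≤ τ m + C * (3:ℝ) ^ (-(m:ℝ)) := by
    intro m; have := hτ m; linarith
  have hσ0 : ∀ m : ℕ, 0 ≤ τ m + C₁ * (3:ℝ) ^ (-(m:ℝ)) := by
    intro m
    have h1 := hσC m
    have h2 : C * (3:ℝ) ^ (-(m:ℝ)) ≤ C₁ * (3:ℝ) ^ (-(m:ℝ)) :=
      mul_le_mul_of_nonneg_right hCC₁ (hrpos _).le
    linarith
  -- V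
  obtain ⟨V, hVdef⟩ : ∃ V : ℕ → ℝ, V = fun n => ∑ m ∈ Finset.range (n + 1),
      (3:ℝ) ^ (-(ε * ((n:ℝ) - (m:ℝ)))) * (τ m + C₁ * (3:ℝ) ^ (-(m:ℝ))) := ⟨_, rfl⟩
  have hV0 : ∀ n, 0 ≤ V n := by
    intro n
    simp only [hVdef]
    apply Finset.sum_nonneg
    intro m _
    exact mul_nonneg (hrpos _).le (hσ0 m)
  have hmain1 : ∀ n : ℕ, J n ≤ C₁ * (3:ℝ) ^ (-(ε * (n:ℝ))) + C₁ * V n := by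
    intro n
    refine (hmain n).trans ?_
    have h1 : C * (3:ℝ) ^ (-(ε * (n:ℝ))) ≤ C₁ * (3:ℝ) ^ (-(ε * (n:ℝ))) :=
      mul_le_mul_of_nonneg_right hCC₁ (hrpos _).le
    have hSold : (0:ℝ) ≤ ∑ m ∈ Finset.range (n + 1),
        (3:ℝ) ^ (-(ε * ((n:ℝ) - (m:ℝ)))) * (τ m + C * (3:ℝ) ^ (-(m:ℝ))) := by
      apply Finset.sum_nonneg
      intro m _
      exact mul_nonneg (hrpos _).le (hσC m)
    have hle : ∑ m ∈ Finset.range (n + 1),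
        (3:ℝ) ^ (-(ε * ((n:ℝ) - (m:ℝ)))) * (τ m + C * (3:ℝ) ^ (-(m:ℝ))) ≤ V n := by
      simp only [hVdef]
      apply Finset.sum_le_sum
      intro m _
      have h2 : C * (3:ℝ) ^ (-(m:ℝ)) ≤ C₁ * (3:ℝ) ^ (-(m:ℝ)) :=
        mul_le_mul_of_nonneg_right hCC₁ (hrpos _).le
      apply mul_le_mul_of_nonneg_left (by linarith) (hrpos _).le
    have h2 : C * (∑ m ∈ Finset.range (n + 1),
        (3:ℝ) ^ (-(ε * ((n:ℝ) - (m:ℝ)))) * (τ m + C * (3:ℝ) ^ (-(m:ℝ)))) ≤ C₁ * V n := by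
      calc C * (∑ m ∈ Finset.range (n + 1),
          (3:ℝ) ^ (-(ε * ((n:ℝ) - (m:ℝ)))) * (τ m + C * (3:ℝ) ^ (-(m:ℝ))))
          ≤ C₁ * (∑ m ∈ Finset.range (n + 1),
          (3:ℝ) ^ (-(ε * ((n:ℝ) - (m:ℝ)))) * (τ m + C * (3:ℝ) ^ (-(m:ℝ)))) :=
            mul_le_mul_of_nonneg_right hCC₁ hSold
        _ ≤ C₁ * V n := mul_le_mul_of_nonneg_left hle hC₁0.le
    linarith
  -- telescoping
  have htel : ∀ a b : ℕ, ∑ i ∈ Finset.range b, τ (a + i) = J a - J (a + b) := by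
    intro a b
    rw [hJ a, hJ (a + b), Finset.sum_range_add]
    ring
  -- geometric sums
  have hgeom : ∀ b : ℕ, ∑ i ∈ Finset.range b, (3:ℝ) ^ (-(i:ℝ)) ≤ 3/2 := by
    intro b
    have he : ∀ i : ℕ, (3:ℝ) ^ (-(i:ℝ)) = (1/3:ℝ) ^ i := by
      intro i
      rw [Real.rpow_neg h3.le, Real.rpow_natCast, one_div, inv_pow]
    rw [Finset.sum_congr rfl (fun i _ => he i)]
    rw [geom_sum_eq (by norm_num) b, div_le_iff_of_neg (by norm_num)]
    nlinarith [pow_nonneg (by norm_num : (0:ℝ) ≤ 1/3) b]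
  have hgeom2 : ∀ a b : ℕ, ∑ i ∈ Finset.range b, (3:ℝ) ^ (-((a + 1 + i : ℕ):ℝ))
      ≤ (3:ℝ) ^ (-(a:ℝ)) := by
    intro a b
    have he : ∀ i : ℕ, (3:ℝ) ^ (-((a + 1 + i : ℕ):ℝ))
        = (3:ℝ) ^ (-((a:ℝ) + 1)) * (3:ℝ) ^ (-(i:ℝ)) := by
      intro i
      rw [← Real.rpow_add h3]
      congr 1
      push_cast
      ring
    rw [Finset.sum_congr rfl (fun i _ => he i), ← Finset.mul_sum]
    have h2 : (3:ℝ) ^ (-((a:ℝ) + 1)) = (3:ℝ) ^ (-(a:ℝ)) * 3⁻¹ := by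
      rw [show -((a:ℝ) + 1) = -(a:ℝ) + (-1) by ring, Real.rpow_add h3, Real.rpow_neg_one]
    have hS0 : (0:ℝ) ≤ ∑ i ∈ Finset.range b, (3:ℝ) ^ (-(i:ℝ)) :=
      Finset.sum_nonneg fun i _ => (hrpos _).le
    nlinarith [hgeom b, hrpos (-((a:ℝ) + 1))]
  -- block sum bound
  have hblock : ∀ n b : ℕ, ∑ i ∈ Finset.range b,
      (τ (n + 1 + i) + C₁ * (3:ℝ) ^ (-((n + 1 + i : ℕ):ℝ)))
      ≤ J (n + 1) - J (n + 1 + b) + C₁ * (3:ℝ) ^ (-(n:ℝ)) := by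
    intro n b
    rw [Finset.sum_add_distrib, htel (n + 1) b, ← Finset.mul_sum]
    have := mul_le_mul_of_nonneg_left (hgeom2 n b) hC₁0.le
    linarith
  -- J step
  have hJdiff : ∀ n : ℕ, J (n + 1) ≤ J n + C₁ * (3:ℝ) ^ (-(n:ℝ)) := by
    intro n
    have ht : τ n = J n - J (n + 1) := by
      have := htel n 1
      simpa using this
    have h1 := hτ n
    have h2 : C * (3:ℝ) ^ (-(n:ℝ)) ≤ C₁ * (3:ℝ) ^ (-(n:ℝ)) :=
      mul_le_mul_of_nonneg_right hCC₁ (hrpos _).le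
    linarith
  -- choose r
  obtain ⟨r, hr1, hr⟩ : ∃ r : ℕ, 1 ≤ r ∧ (3:ℝ) ^ (-(ε * (r:ℝ))) * (8 * C₁) ≤ 1 := by
    obtain ⟨n, hn⟩ := pow_unbounded_of_one_lt (8 * C₁)
      (Real.one_lt_rpow_iff_of_pos h3 |>.mpr (Or.inl ⟨by norm_num, hε⟩))
    refine ⟨n + 1, Nat.le_add_left 1 n, ?_⟩
    have hb1 : (1:ℝ) < (3:ℝ) ^ ε :=
      (Real.one_lt_rpow_iff_of_pos h3).mpr (Or.inl ⟨by norm_num, hε⟩)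
    have hpow : (3:ℝ) ^ (ε * ((n + 1 : ℕ):ℝ)) = ((3:ℝ) ^ ε) ^ (n + 1) := by
      rw [Real.rpow_mul h3.le, Real.rpow_natCast]
    have h1 : 8 * C₁ ≤ ((3:ℝ) ^ ε) ^ (n + 1) := by
      have h2 : ((3:ℝ) ^ ε) ^ n ≤ ((3:ℝ) ^ ε) ^ (n + 1) :=
        pow_le_pow_right₀ hb1.le (Nat.le_succ n)
      linarith
    rw [Real.rpow_neg h3.le, hpow, inv_mul_le_iff₀ (by positivity)]
    linarith
  -- exponents
  obtain ⟨ε', hε'def⟩ : ∃ e : ℝ, e = min ε 1 := ⟨_, rfl⟩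
  have hε'pos : 0 < ε' := hε'def ▸ lt_min hε one_pos
  have hε'ε : ε' ≤ ε := hε'def ▸ min_le_left _ _
  have hε'1 : ε' ≤ 1 := hε'def ▸ min_le_right _ _
  obtain ⟨E, hEdef⟩ : ∃ E : ℕ → ℝ, E = fun n : ℕ => (3:ℝ) ^ (-(ε' * (n:ℝ))) := ⟨_, rfl⟩
  have hE0 : ∀ n, 0 < E n := by
    intro n
    simp only [hEdef]
    exact hrpos _
  have hEn : ∀ n : ℕ, (3:ℝ) ^ (-((n:ℝ))) ≤ E n := by
    intro n
    simp only [hEdef]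
    apply hmono
    linarith [mul_nonneg (sub_nonneg.mpr hε'1) (Nat.cast_nonneg (α := ℝ) n)]
  obtain ⟨a, hadef⟩ : ∃ x : ℝ, x = (3:ℝ) ^ (-(ε * (r:ℝ))) := ⟨_, rfl⟩
  have ha0 : 0 < a := hadef ▸ hrpos _
  -- V splitting
  have hVsplit : ∀ n : ℕ, V (n + r) ≤ a * V n + (J (n + 1) - J (n + 1 + r))
      + C₁ * (3:ℝ) ^ (-(n:ℝ)) := by
    intro n
    have hidx : (n + r) + 1 = (n + 1) + r := by omega
    have hV1 : V (n + r) = (∑ m ∈ Finset.range (n + 1),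
        (3:ℝ) ^ (-(ε * (((n + r : ℕ):ℝ) - (m:ℝ)))) * (τ m + C₁ * (3:ℝ) ^ (-(m:ℝ))))
        + ∑ i ∈ Finset.range r,
        (3:ℝ) ^ (-(ε * (((n + r : ℕ):ℝ) - ((n + 1 + i : ℕ):ℝ))))
          * (τ (n + 1 + i) + C₁ * (3:ℝ) ^ (-((n + 1 + i : ℕ):ℝ))) := by
      simp only [hVdef]
      rw [hidx, Finset.sum_range_add]
    have hfirst : ∑ m ∈ Finset.range (n + 1),
        (3:ℝ) ^ (-(ε * (((n + r : ℕ):ℝ) - (m:ℝ)))) * (τ m + C₁ * (3:ℝ) ^ (-(m:ℝ)))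
        = a * V n := by
      simp only [hVdef]
      rw [Finset.mul_sum]
      apply Finset.sum_congr rfl
      intro m _
      rw [← mul_assoc, hadef, ← Real.rpow_add h3]
      congr 2
      push_cast
      ring
    have hsecond : ∑ i ∈ Finset.range r,
        (3:ℝ) ^ (-(ε * (((n + r : ℕ):ℝ) - ((n + 1 + i : ℕ):ℝ))))
          * (τ (n + 1 + i) + C₁ * (3:ℝ) ^ (-((n + 1 + i : ℕ):ℝ)))
        ≤ ∑ i ∈ Finset.range r, (τ (n + 1 + i) + C₁ * (3:ℝ) ^ (-((n + 1 + i : ℕ):ℝ))) := by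
      apply Finset.sum_le_sum
      intro i hi
      have hi' : (i:ℝ) + 1 ≤ (r:ℝ) := by exact_mod_cast Finset.mem_range.mp hi
      have hexp : -(ε * (((n + r : ℕ):ℝ) - ((n + 1 + i : ℕ):ℝ))) ≤ 0 := by
        have h1 : (0:ℝ) ≤ ((n + r : ℕ):ℝ) - ((n + 1 + i : ℕ):ℝ) := by push_cast; linarith
        linarith [mul_nonneg hε.le h1]
      exact mul_le_of_le_one_left (hσ0 _) (hwle1 _ hexp)
    have := hblock n r
    linarith [hV1, hfirst, hsecond]
  have hVsplit' : ∀ n : ℕ, V (n + r) ≤ a * V n + J (n + 1) + C₁ * E n := by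
    intro n
    have h1 := hVsplit n
    have h2 := hJpos (n + 1 + r)
    have h3' := mul_le_mul_of_nonneg_left (hEn n) hC₁0.le
    linarith
  -- key recursion for J
  have hB : ∀ n : ℕ, (1 + C₁) * J (n + r + 1)
      ≤ 3 * C₁^2 * E n + C₁ * a * V n + C₁ * J (n + 1) := by
    intro n
    have A1 := hJdiff (n + r)
    have A2 := hmain1 (n + r)
    have hidx2 : n + 1 + r = n + r + 1 := by omega
    have A3' := hVsplit n
    rw [hidx2] at A3'
    have A3 := mul_le_mul_of_nonneg_left A3' hC₁0.le
    have e1 : (3:ℝ) ^ (-((n + r : ℕ):ℝ)) ≤ E n := by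
      simp only [hEdef]
      apply hmono
      push_cast
      linarith [mul_nonneg (sub_nonneg.mpr hε'1) (Nat.cast_nonneg (α := ℝ) n),
        Nat.cast_nonneg (α := ℝ) r]
    have e2 : (3:ℝ) ^ (-(ε * ((n + r : ℕ):ℝ))) ≤ E n := by
      simp only [hEdef]
      apply hmono
      push_cast
      linarith [mul_nonneg (sub_nonneg.mpr hε'ε) (Nat.cast_nonneg (α := ℝ) n),
        mul_nonneg hε.le (Nat.cast_nonneg (α := ℝ) r)]
    have A4 := mul_le_mul_of_nonneg_left e1 hC₁0.le
    have A5 := mul_le_mul_of_nonneg_left e2 hC₁0.le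
    have A6 := mul_le_mul_of_nonneg_left (mul_le_mul_of_nonneg_left (hEn n) hC₁0.le) hC₁0.le
    have A7 : C₁ * E n ≤ C₁^2 * E n :=
      mul_le_mul_of_nonneg_right hC₁sq (hE0 n).le
    linarith [A1, A2, A3, A4, A5, A6, A7]
  -- the Lyapunov functional
  obtain ⟨Φ, hΦdef⟩ : ∃ Φ : ℕ → ℝ, Φ = fun n => V n + 2 * (1 + C₁) * J (n + 1) := ⟨_, rfl⟩
  obtain ⟨κ, hκdef⟩ : ∃ x : ℝ, x = (1 + 2 * C₁) / (2 * (1 + C₁)) := ⟨_, rfl⟩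
  have hκ2 : 2 * (1 + C₁) * κ = 1 + 2 * C₁ := by
    rw [hκdef]
    field_simp
  have hκ34 : 3/4 ≤ κ := by
    rw [hκdef, le_div_iff₀ (by positivity)]
    linarith
  have hκa : (1 + 2 * C₁) * a ≤ κ := by
    have hr' : a * (8 * C₁) ≤ 1 := by rw [hadef]; exact hr
    linarith [mul_nonneg (sub_nonneg.mpr hC₁1) ha0.le, hκ34]
  have hΦstep : ∀ n : ℕ, Φ (n + r) ≤ κ * Φ n + 7 * C₁^2 * E n := by
    intro n
    have h1 := hVsplit' n
    have h2 := hB n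
    have p1 : (1 + 2 * C₁) * a * V n ≤ κ * V n := by
      apply mul_le_mul_of_nonneg_right hκa (hV0 n)
    have q1 : (2 * (1 + C₁) * κ) * J (n + 1) = (1 + 2 * C₁) * J (n + 1) := by
      rw [hκ2]
    have p2 : C₁ * E n ≤ C₁^2 * E n :=
      mul_le_mul_of_nonneg_right hC₁sq (hE0 n).le
    simp only [hΦdef]
    linarith [h1, h2, p1, q1, p2]
  -- choice of γ
  obtain ⟨δ, hδdef⟩ : ∃ x : ℝ, x = 1 / (4 * (1 + C₁)) := ⟨_, rfl⟩
  have hδpos : 0 < δ := by rw [hδdef]; positivity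
  have hδ18 : δ ≤ 1/8 := by
    rw [hδdef, div_le_div_iff₀ (by positivity) (by norm_num)]
    linarith
  have hκδ : κ = 1 - 2 * δ := by
    rw [hκdef, hδdef]
    field_simp
    ring
  have hr0 : (0:ℝ) < (r:ℝ) := by exact_mod_cast Nat.lt_of_lt_of_le Nat.zero_lt_one hr1
  obtain ⟨γ, hγdef⟩ : ∃ x : ℝ, x = min (ε/2) (min (ε'/2) (δ/(2*(r:ℝ)))) := ⟨_, rfl⟩
  have hγpos : 0 < γ := by
    rw [hγdef]
    exact lt_min (by positivity) (lt_min (by positivity) (by positivity))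
  have hγε : γ < ε := by
    rw [hγdef]
    exact lt_of_le_of_lt (min_le_left _ _) (by linarith)
  have hγε' : γ ≤ ε' := by
    rw [hγdef]
    exact le_trans (le_trans (min_le_right _ _) (min_le_left _ _)) (by linarith)
  have hγ1 : γ ≤ 1 := by linarith
  have hγr : γ * (r:ℝ) ≤ δ/2 := by
    have h1 : γ ≤ δ/(2*(r:ℝ)) := by
      rw [hγdef]
      exact le_trans (min_le_right _ _) (min_le_right _ _)
    have h2 := mul_le_mul_of_nonneg_right h1 hr0.le
    have h3' : δ/(2*(r:ℝ)) * (r:ℝ) = δ/2 := by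
      field_simp
    linarith
  have h3γr : 1 - δ ≤ (3:ℝ) ^ (-(γ * (r:ℝ))) := by
    rw [Real.rpow_def_of_pos h3]
    have hlog : Real.log 3 ≤ 2 := by
      have := Real.log_le_sub_one_of_pos h3
      linarith
    have h1 : Real.log 3 * (-(γ * (r:ℝ))) + 1 ≤ Real.exp (Real.log 3 * (-(γ * (r:ℝ)))) :=
      Real.add_one_le_exp _
    have h2 : (0:ℝ) ≤ (2 - Real.log 3) * (γ * (r:ℝ)) :=
      mul_nonneg (by linarith) (mul_nonneg hγpos.le hr0.le)
    linarith [hγr]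
  have hEγ : ∀ n : ℕ, E n ≤ (3:ℝ) ^ (-(γ * (n:ℝ))) := by
    intro n
    simp only [hEdef]
    apply hmono
    linarith [mul_nonneg (sub_nonneg.mpr hγε') (Nat.cast_nonneg (α := ℝ) n)]
  -- a priori bounds
  have hJle : ∀ n : ℕ, J n ≤ J0 + 2 * C₁ := by
    intro n
    have h1 : ∑ m ∈ Finset.range n, (-C₁ * (3:ℝ) ^ (-(m:ℝ))) ≤ ∑ m ∈ Finset.range n, τ m := by
      apply Finset.sum_le_sum
      intro m _
      have := hσ0 m
      linarith
    have h2 : ∑ m ∈ Finset.range n, (-C₁ * (3:ℝ) ^ (-(m:ℝ)))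
        = -C₁ * ∑ m ∈ Finset.range n, (3:ℝ) ^ (-(m:ℝ)) := by
      rw [Finset.mul_sum]
    have h3' := hgeom n
    have h4 : (0:ℝ) ≤ ∑ m ∈ Finset.range n, (3:ℝ) ^ (-(m:ℝ)) :=
      Finset.sum_nonneg fun m _ => (hrpos _).le
    rw [hJ n]
    have h5 := mul_le_mul_of_nonneg_left h3' hC₁0.le
    linarith
  have hVle : ∀ n : ℕ, V n ≤ J0 + 2 * C₁ := by
    intro n
    have s1 : V n ≤ ∑ m ∈ Finset.range (n + 1), (τ m + C₁ * (3:ℝ) ^ (-(m:ℝ))) := by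
      simp only [hVdef]
      apply Finset.sum_le_sum
      intro m hm
      have hm' : (m:ℝ) ≤ (n:ℝ) := by
        exact_mod_cast Nat.lt_succ_iff.mp (Finset.mem_range.mp hm)
      have hexp : -(ε * ((n:ℝ) - (m:ℝ))) ≤ 0 := by
        linarith [mul_nonneg hε.le (sub_nonneg.mpr hm')]
      exact mul_le_of_le_one_left (hσ0 _) (hwle1 _ hexp)
    have s2 : ∑ m ∈ Finset.range (n + 1), (τ m + C₁ * (3:ℝ) ^ (-(m:ℝ)))
        = (∑ m ∈ Finset.range (n + 1), τ m) + C₁ * ∑ m ∈ Finset.range (n + 1), (3:ℝ) ^ (-(m:ℝ)) := by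
      rw [Finset.sum_add_distrib, Finset.mul_sum]
    have s3 : ∑ m ∈ Finset.range (n + 1), τ m = J0 - J (n + 1) := by
      have := hJ (n + 1)
      linarith
    have s4 := hgeom (n + 1)
    have s5 := mul_le_mul_of_nonneg_left s4 hC₁0.le
    linarith [hJpos (n + 1)]
  have hΦle : ∀ n : ℕ, Φ n ≤ 5 * C₁ * (J0 + 2 * C₁) := by
    intro n
    simp only [hΦdef]
    have hS0 : (0:ℝ) ≤ J0 + 2 * C₁ := by linarith
    have w1 : 2 * (1 + C₁) * J (n + 1) ≤ 2 * (1 + C₁) * (J0 + 2 * C₁) :=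
      mul_le_mul_of_nonneg_left (hJle (n + 1)) (by linarith)
    have w2 : (3 + 2 * C₁) * (J0 + 2 * C₁) ≤ 5 * C₁ * (J0 + 2 * C₁) :=
      mul_le_mul_of_nonneg_right (by linarith) hS0
    linarith [hVle n]
  obtain ⟨M, hMdef⟩ : ∃ x : ℝ, x = 10 * C₁ * (J0 + 2 * C₁) + 28 * C₁^2 * (1 + C₁) := ⟨_, rfl⟩
  have hM0 : 0 < M := by
    rw [hMdef]
    have w1 : (0:ℝ) < 28 * C₁^2 * (1 + C₁) := by positivity
    have w2 : (0:ℝ) ≤ 10 * C₁ * (J0 + 2 * C₁) := by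
      apply mul_nonneg (by linarith)
      linarith
    linarith
  have hMa : 7 * C₁^2 ≤ δ * M := by
    have key : δ * (4 * (1 + C₁) * (7 * C₁^2)) = 7 * C₁^2 := by
      rw [hδdef]
      field_simp
    have h1 : 4 * (1 + C₁) * (7 * C₁^2) ≤ M := by
      rw [hMdef]
      have w2 : (0:ℝ) ≤ 10 * C₁ * (J0 + 2 * C₁) := by
        apply mul_nonneg (by linarith)
        linarith
      linarith [w2]
    have h2 := mul_le_mul_of_nonneg_left h1 hδpos.le
    linarith
  have hMB : 5 * C₁ * (J0 + 2 * C₁) ≤ M * (1 - δ) := by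
    have h1 := mul_le_mul_of_nonneg_left hδ18 hM0.le
    have h2 : 0 ≤ C₁ * (J0 + 2 * C₁) := mul_nonneg hC₁0.le (by linarith)
    have h3' : 10 * C₁ * (J0 + 2 * C₁) ≤ M := by
      rw [hMdef]
      have w1 : (0:ℝ) ≤ 28 * C₁^2 * (1 + C₁) := by positivity
      linarith
    linarith
  have hκMa : κ * M + 7 * C₁^2 ≤ M * (1 - δ) := by
    have hκM : κ * M = M - 2 * (δ * M) := by rw [hκδ]; ring
    linarith
  -- the decay bound for Φ
  have hΦbound : ∀ n : ℕ, Φ n ≤ M * (3:ℝ) ^ (-(γ * (n:ℝ))) := by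
    intro n
    induction n using Nat.strong_induction_on with
    | _ n ih =>
      rcases lt_or_ge n r with hlt | hge
      · have hcast : (n:ℝ) ≤ (r:ℝ) := Nat.cast_le.mpr hlt.le
        have h1 : (3:ℝ) ^ (-(γ * (r:ℝ))) ≤ (3:ℝ) ^ (-(γ * (n:ℝ))) := by
          apply hmono
          linarith [mul_le_mul_of_nonneg_left hcast hγpos.le]
        have h2 : M * (1 - δ) ≤ M * (3:ℝ) ^ (-(γ * (n:ℝ))) :=
          mul_le_mul_of_nonneg_left (h3γr.trans h1) hM0.le
        linarith [hΦle n, hMB]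
      · obtain ⟨k, rfl⟩ : ∃ k, n = k + r := ⟨n - r, by omega⟩
        have hk : k < k + r := by omega
        have ih' := ih k hk
        have hstep := hΦstep k
        have hmul : κ * Φ k ≤ κ * (M * (3:ℝ) ^ (-(γ * (k:ℝ)))) :=
          mul_le_mul_of_nonneg_left ih' (by linarith)
        have hE'' : 7 * C₁^2 * E k ≤ 7 * C₁^2 * (3:ℝ) ^ (-(γ * (k:ℝ))) :=
          mul_le_mul_of_nonneg_left (hEγ k) (by positivity)
        have h4 : (κ * M + 7 * C₁^2) * (3:ℝ) ^ (-(γ * (k:ℝ)))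
            ≤ (M * (1 - δ)) * (3:ℝ) ^ (-(γ * (k:ℝ))) :=
          mul_le_mul_of_nonneg_right hκMa (hrpos _).le
        have h5 : (M * (1 - δ)) * (3:ℝ) ^ (-(γ * (k:ℝ)))
            ≤ (M * (3:ℝ) ^ (-(γ * (r:ℝ)))) * (3:ℝ) ^ (-(γ * (k:ℝ))) :=
          mul_le_mul_of_nonneg_right (mul_le_mul_of_nonneg_left h3γr hM0.le) (hrpos _).le
        have h6 : (M * (3:ℝ) ^ (-(γ * (r:ℝ)))) * (3:ℝ) ^ (-(γ * (k:ℝ)))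
            = M * (3:ℝ) ^ (-(γ * ((k + r : ℕ):ℝ))) := by
          rw [mul_assoc, ← Real.rpow_add h3]
          congr 2
          push_cast
          ring
        linarith [hstep, hmul, hE'', h4, h5, h6]
  -- conclusion
  refine ⟨γ, hγpos, hγε, 3 * M + J0 + 1, by linarith [hM0], fun n => ?_⟩
  have hJb : ∀ n : ℕ, J n ≤ (3 * M + J0 + 1) * (3:ℝ) ^ (-(γ * (n:ℝ))) := by
    intro n
    match n with
    | 0 =>
      have h0 : J 0 = J0 := by rw [hJ 0]; simp
      have h1 : (3:ℝ) ^ (-(γ * ((0:ℕ):ℝ))) = 1 := by norm_num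
      rw [h0, h1]
      linarith [hM0]
    | Nat.succ k =>
      have h1 : J (k + 1) ≤ Φ k := by
        simp only [hΦdef]
        linarith [hV0 k, mul_nonneg (by linarith : (0:ℝ) ≤ 1 + 2 * C₁) (hJpos (k + 1))]
      have h2 := hΦbound k
      have e : (3:ℝ) ^ (-(γ * (k:ℝ))) = (3:ℝ) ^ γ * (3:ℝ) ^ (-(γ * ((k + 1 : ℕ):ℝ))) := by
        rw [← Real.rpow_add h3]
        congr 1
        push_cast
        ring
      have e2 : (3:ℝ) ^ (γ:ℝ) ≤ 3 := by
        calc (3:ℝ) ^ γ ≤ (3:ℝ) ^ (1:ℝ) := hmono _ _ hγ1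
        _ = 3 := Real.rpow_one 3
      have h3' : M * (3:ℝ) ^ (-(γ * (k:ℝ))) ≤ 3 * M * (3:ℝ) ^ (-(γ * ((k + 1 : ℕ):ℝ))) := by
        rw [e]
        have w := mul_nonneg (mul_nonneg hM0.le (hrpos (-(γ * ((k + 1 : ℕ):ℝ)))).le)
          (sub_nonneg.mpr e2)
        nlinarith [w]
      have h4 : 3 * M * (3:ℝ) ^ (-(γ * ((k + 1 : ℕ):ℝ)))
          ≤ (3 * M + J0 + 1) * (3:ℝ) ^ (-(γ * ((k + 1 : ℕ):ℝ))) :=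
        mul_le_mul_of_nonneg_right (by linarith) (hrpos _).le
      linarith
  refine ⟨hJb n, ?_⟩
  have ht : τ n = J n - J (n + 1) := by
    have := htel n 1
    simpa using this
  have := hJpos (n + 1)
  linarith [hJb n]
end
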